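/- Adequacy: if Γ ⊢ t : A in the simply typed distributive λ-calculus and θ is a substitution with θ(x) ∈ ⟦B⟧ for every x:B ∈ Γ, then θ(t) ∈ ⟦A⟧. -/

import Mathlib

inductive Tm : Type
| var : ℕ → Tm
| lam : Tm → Tm
| app : Tm → Tm → Tm
| pair : Tm → Tm → Tm
| p1 : Tm → Tm
| p2 : Tm → Tm

namespace Tm

/-- Renaming of de Bruijn indices. -/
def rename (f : ℕ → ℕ) : Tm → Tm
| var n => var (f n)
| lam t => lam (t.rename (fun n => match n with | 0 => 0 | n+1 => f n + 1))
| app t s => app (t.rename f) (s.rename f)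
| pair t s => pair (t.rename f) (s.rename f)
| p1 t => p1 (t.rename f)
| p2 t => p2 (t.rename f)

/-- Capture-avoiding simultaneous substitution. -/
def subst (σ : ℕ → Tm) : Tm → Tm
| var n => σ n
| lam t => lam (t.subst (fun n => match n with | 0 => var 0 | n+1 => (σ n).rename Nat.succ))
| app t s => app (t.subst σ) (s.subst σ)
| pair t s => pair (t.subst σ) (s.subst σ)
| p1 t => p1 (t.subst σ)
| p2 t => p2 (t.subst σ)

/-- Substitution of the single (outermost) free variable: t[x := s]. -/
def subst1 (t s : Tm) : Tm :=
  t.subst (fun n => match n with | 0 => s | n+1 => var n)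

/-- One-step reduction of the distributive λ-calculus. -/
inductive Step : Tm → Tm → Prop
| beta (t s) : Step (app (lam t) s) (t.subst1 s)
| proj1 (t1 t2) : Step (p1 (pair t1 t2)) t1
| proj2 (t1 t2) : Step (p2 (pair t1 t2)) t2
| pairApp (t s u) : Step (app (pair t s) u) (pair (app t u) (app s u))
| projLam1 (t) : Step (p1 (lam t)) (lam (p1 t))
| projLam2 (t) : Step (p2 (lam t)) (lam (p2 t))
| lam_cong {t t'} : Step t t' → Step (lam t) (lam t')
| appL {t t' s} : Step t t' → Step (app t s) (app t' s)
| appR {t s s'} : Step s s' → Step (app t s) (app t s')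
| pairL {t t' s} : Step t t' → Step (pair t s) (pair t' s)
| pairR {t s s'} : Step s s' → Step (pair t s) (pair t s')
| p1_cong {t t'} : Step t t' → Step (p1 t) (p1 t')
| p2_cong {t t'} : Step t t' → Step (p2 t) (p2 t')

/-- Many-step reduction. -/
def Steps : Tm → Tm → Prop := Relation.ReflTransGen Step

/-- A term is normal when no rule applies anywhere in it. -/
def Normal (t : Tm) : Prop := ¬ ∃ s, Step t s

/-- All free variables are < k. -/
def closedUnder : ℕ → Tm → Prop
| k, var n => n < k
| k, lam t => closedUnder (k+1) t
| k, app t s => closedUnder k t ∧ closedUnder k s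
| k, pair t s => closedUnder k t ∧ closedUnder k s
| k, p1 t => closedUnder k t
| k, p2 t => closedUnder k t

def Closed (t : Tm) : Prop := closedUnder 0 t

/-- Values: variables, abstractions, pairs. -/
def IsValue : Tm → Prop
| var _ => True
| lam _ => True
| pair _ _ => True
| _ => False

/-- Neutral terms: variables, applications, projections. -/
def Neutral : Tm → Prop
| var _ => True
| app _ _ => True
| p1 _ => True
| p2 _ => True
| _ => False

/-- Strong normalization: every reduction sequence is finite. -/
def SN (t : Tm) : Prop := Acc (fun a b => Step b a) t

end Tm

inductive Ty : Type
| base : Ty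
| arr : Ty → Ty → Ty
| conj : Ty → Ty → Ty

/-- The least congruence containing distributivity A ⇒ (B ∧ C) ≡ (A ⇒ B) ∧ (A ⇒ C). -/
inductive Iso : Ty → Ty → Prop
| refl (A) : Iso A A
| symm {A B} : Iso A B → Iso B A
| trans {A B C} : Iso A B → Iso B C → Iso A C
| distr (A B C) : Iso (Ty.arr A (Ty.conj B C)) (Ty.conj (Ty.arr A B) (Ty.arr A C))
| arrL {A C} (B) : Iso A C → Iso (Ty.arr A B) (Ty.arr C B)
| arrR {B C} (A) : Iso B C → Iso (Ty.arr A B) (Ty.arr A C)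
| conjL {A C} (B) : Iso A C → Iso (Ty.conj A B) (Ty.conj C B)
| conjR {B C} (A) : Iso B C → Iso (Ty.conj A B) (Ty.conj A C)

/-- Typing, with contexts as lists of types (de Bruijn), including the conversion rule for ≡. -/
inductive Typing : List Ty → Tm → Ty → Prop
| var {Γ n A} : Γ[n]? = some A → Typing Γ (Tm.var n) A
| lam {Γ t A B} : Typing (A :: Γ) t B → Typing Γ (Tm.lam t) (Ty.arr A B)
| app {Γ t s A B} : Typing Γ t (Ty.arr A B) → Typing Γ s A → Typing Γ (Tm.app t s) B
| pair {Γ t s A B} : Typing Γ t A → Typing Γ s B → Typing Γ (Tm.pair t s) (Ty.conj A B)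
| p1 {Γ t A B} : Typing Γ t (Ty.conj A B) → Typing Γ (Tm.p1 t) A
| p2 {Γ t A B} : Typing Γ t (Ty.conj A B) → Typing Γ (Tm.p2 t) B
| iso {Γ t A B} : Typing Γ t A → Iso A B → Typing Γ t B

/-- Reducibility interpretation of types. -/
def Red : Ty → Tm → Prop
| Ty.base, t => Tm.SN t
| Ty.arr A B, t => ∀ s, Red A s → Red B (Tm.app t s)
| Ty.conj A B, t => Red A (Tm.p1 t) ∧ Red B (Tm.p2 t)

section Aux
open Tm

namespace Tm


theorem rename_ext (t : Tm) {f g : ℕ → ℕ} (h : ∀ n, f n = g n) : t.rename f = t.rename g :=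
  congrArg (fun f => rename f t) (funext h)

theorem subst_ext (t : Tm) {σ τ : ℕ → Tm} (h : ∀ n, σ n = τ n) : t.subst σ = t.subst τ :=
  congrArg (fun σ => subst σ t) (funext h)

theorem rename_rename (t : Tm) : ∀ f g, (t.rename f).rename g = t.rename (fun n => g (f n)) := by
  induction t with
  | var n => intros; rfl
  | lam t ih =>
    intro f g
    simp only [rename, ih]
    refine congrArg Tm.lam ?_
    apply rename_ext
    intro n
    cases n <;> rfl
  | app t s iht ihs => intro f g; simp [rename, iht, ihs]
  | pair t s iht ihs => intro f g; simp [rename, iht, ihs]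
  | p1 t ih => intro f g; simp [rename, ih]
  | p2 t ih => intro f g; simp [rename, ih]

theorem subst_rename (t : Tm) : ∀ f σ, (t.rename f).subst σ = t.subst (fun n => σ (f n)) := by
  induction t with
  | var n => intros; rfl
  | lam t ih =>
    intro f σ
    simp only [rename, subst, ih]
    refine congrArg Tm.lam ?_
    apply subst_ext
    intro n
    cases n <;> rfl
  | app t s iht ihs => intro f σ; simp [rename, subst, iht, ihs]
  | pair t s iht ihs => intro f σ; simp [rename, subst, iht, ihs]
  | p1 t ih => intro f σ; simp [rename, subst, ih]
  | p2 t ih => intro f σ; simp [rename, subst, ih]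

theorem rename_subst (t : Tm) : ∀ σ f, (t.subst σ).rename f = t.subst (fun n => (σ n).rename f) := by
  induction t with
  | var n => intros; rfl
  | lam t ih =>
    intro σ f
    simp only [rename, subst, ih]
    refine congrArg Tm.lam ?_
    apply subst_ext
    intro n
    cases n with
    | zero => rfl
    | succ n => simp [rename_rename]
  | app t s iht ihs => intro σ f; simp [rename, subst, iht, ihs]
  | pair t s iht ihs => intro σ f; simp [rename, subst, iht, ihs]
  | p1 t ih => intro σ f; simp [rename, subst, ih]
  | p2 t ih => intro σ f; simp [rename, subst, ih]

theorem subst_subst (t : Tm) : ∀ σ τ, (t.subst σ).subst τ = t.subst (fun n => (σ n).subst τ) := by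
  induction t with
  | var n => intros; rfl
  | lam t ih =>
    intro σ τ
    simp only [subst, ih]
    refine congrArg Tm.lam ?_
    apply subst_ext
    intro n
    cases n with
    | zero => rfl
    | succ n => simp [subst_rename, rename_subst]
  | app t s iht ihs => intro σ τ; simp [subst, iht, ihs]
  | pair t s iht ihs => intro σ τ; simp [subst, iht, ihs]
  | p1 t ih => intro σ τ; simp [subst, ih]
  | p2 t ih => intro σ τ; simp [subst, ih]

theorem subst_id (t : Tm) : ∀ σ, (∀ n, σ n = Tm.var n) → t.subst σ = t := by
  induction t with
  | var n => intro σ h; exact h n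
  | lam t ih =>
    intro σ h
    simp only [subst]
    rw [ih]
    intro n
    cases n with
    | zero => rfl
    | succ n => simp [h n, rename]
  | app t s iht ihs => intro σ h; simp [subst, iht _ h, ihs _ h]
  | pair t s iht ihs => intro σ h; simp [subst, iht _ h, ihs _ h]
  | p1 t ih => intro σ h; simp [subst, ih _ h]
  | p2 t ih => intro σ h; simp [subst, ih _ h]

theorem subst1_rename (t s : Tm) (f) :
    (t.subst1 s).rename f
      = (t.rename (fun n => match n with | 0 => 0 | n+1 => f n + 1)).subst1 (s.rename f) := by
  simp only [subst1, rename_subst, subst_rename]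
  apply subst_ext
  intro n
  cases n <;> rfl

theorem subst1_subst (t s : Tm) (σ) :
    (t.subst1 s).subst σ
      = (t.subst (fun n => match n with | 0 => Tm.var 0 | n+1 => (σ n).rename Nat.succ)).subst1 (s.subst σ) := by
  simp only [subst1, subst_subst]
  apply subst_ext
  intro n
  cases n with
  | zero => rfl
  | succ n =>
    simp only [subst_rename]
    exact (subst_id _ _ (fun _ => rfl)).symm

theorem subst_up_subst1 (t : Tm) (σ : ℕ → Tm) (s : Tm) :
    (t.subst (fun n => match n with | 0 => Tm.var 0 | n+1 => (σ n).rename Nat.succ)).subst1 s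
      = t.subst (fun n => match n with | 0 => s | n+1 => σ n) := by
  simp only [subst1, subst_subst]
  apply subst_ext
  intro n
  cases n with
  | zero => rfl
  | succ n =>
    show ((σ n).rename Nat.succ).subst (fun k => match k with | 0 => s | k+1 => Tm.var k) = σ n
    rw [subst_rename]
    exact subst_id _ _ (fun _ => rfl)

theorem step_rename {t t'} (h : Step t t') : ∀ f, Step (t.rename f) (t'.rename f) := by
  induction h with
  | beta t s =>
    intro f
    simp only [rename, subst1_rename]
    exact Step.beta _ _
  | proj1 t1 t2 => intro f; exact Step.proj1 _ _
  | proj2 t1 t2 => intro f; exact Step.proj2 _ _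
  | pairApp t s u => intro f; exact Step.pairApp _ _ _
  | projLam1 t => intro f; exact Step.projLam1 _
  | projLam2 t => intro f; exact Step.projLam2 _
  | lam_cong _ ih => intro f; exact Step.lam_cong (ih _)
  | appL _ ih => intro f; exact Step.appL (ih _)
  | appR _ ih => intro f; exact Step.appR (ih _)
  | pairL _ ih => intro f; exact Step.pairL (ih _)
  | pairR _ ih => intro f; exact Step.pairR (ih _)
  | p1_cong _ ih => intro f; exact Step.p1_cong (ih _)
  | p2_cong _ ih => intro f; exact Step.p2_cong (ih _)

theorem step_subst {t t'} (h : Step t t') : ∀ σ, Step (t.subst σ) (t'.subst σ) := by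
  induction h with
  | beta t s =>
    intro σ
    simp only [subst, subst1_subst]
    exact Step.beta _ _
  | proj1 t1 t2 => intro σ; exact Step.proj1 _ _
  | proj2 t1 t2 => intro σ; exact Step.proj2 _ _
  | pairApp t s u => intro σ; exact Step.pairApp _ _ _
  | projLam1 t => intro σ; exact Step.projLam1 _
  | projLam2 t => intro σ; exact Step.projLam2 _
  | lam_cong _ ih => intro σ; exact Step.lam_cong (ih _)
  | appL _ ih => intro σ; exact Step.appL (ih _)
  | appR _ ih => intro σ; exact Step.appR (ih _)
  | pairL _ ih => intro σ; exact Step.pairL (ih _)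
  | pairR _ ih => intro σ; exact Step.pairR (ih _)
  | p1_cong _ ih => intro σ; exact Step.p1_cong (ih _)
  | p2_cong _ ih => intro σ; exact Step.p2_cong (ih _)

theorem steps_lift (f : Tm → Tm) (hf : ∀ {a b}, Step a b → Step (f a) (f b))
    {t t'} (h : Steps t t') : Steps (f t) (f t') :=
  Relation.ReflTransGen.lift f (fun _ _ hab => hf hab) _ _ h

theorem subst_steps (t : Tm) : ∀ σ σ', (∀ n, Steps (σ n) (σ' n)) → Steps (t.subst σ) (t.subst σ') := by
  induction t with
  | var n => intro σ σ' h; exact h n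
  | lam t ih =>
    intro σ σ' h
    have h2 : ∀ n, Steps
        ((fun n => match n with | 0 => Tm.var 0 | n+1 => (σ n).rename Nat.succ) n)
        ((fun n => match n with | 0 => Tm.var 0 | n+1 => (σ' n).rename Nat.succ) n) := by
      intro n
      cases n with
      | zero => exact Relation.ReflTransGen.refl
      | succ n => exact steps_lift (rename Nat.succ) (fun hs => step_rename hs _) (h n)
    exact steps_lift Tm.lam (fun hs => Step.lam_cong hs) (ih _ _ h2)
  | app t s iht ihs =>
    intro σ σ' h
    exact Relation.ReflTransGen.trans
      (steps_lift (fun x => Tm.app x (s.subst σ)) (fun hs => Step.appL hs) (iht _ _ h))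
      (steps_lift (fun x => Tm.app (t.subst σ') x) (fun hs => Step.appR hs) (ihs _ _ h))
  | pair t s iht ihs =>
    intro σ σ' h
    exact Relation.ReflTransGen.trans
      (steps_lift (fun x => Tm.pair x (s.subst σ)) (fun hs => Step.pairL hs) (iht _ _ h))
      (steps_lift (fun x => Tm.pair (t.subst σ') x) (fun hs => Step.pairR hs) (ihs _ _ h))
  | p1 t ih => intro σ σ' h; exact steps_lift Tm.p1 (fun hs => Step.p1_cong hs) (ih _ _ h)
  | p2 t ih => intro σ σ' h; exact steps_lift Tm.p2 (fun hs => Step.p2_cong hs) (ih _ _ h)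

theorem steps_subst1_arg (u : Tm) {s s'} (h : Step s s') : Steps (u.subst1 s) (u.subst1 s') := by
  refine subst_steps u _ _ ?_
  intro n
  cases n with
  | zero => exact Relation.ReflTransGen.single h
  | succ n => exact Relation.ReflTransGen.refl

theorem sn_of_image (f : Tm → Tm) (hf : ∀ a b, Step a b → Step (f a) (f b)) :
    ∀ t, SN (f t) → SN t := by
  have key : ∀ u, SN u → ∀ t, u = f t → SN t := by
    intro u hu
    induction hu with
    | intro u _ ih =>
      rintro t rfl
      exact Acc.intro _ (fun t' h => ih (f t') (hf _ _ h) t' rfl)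
  exact fun t h => key _ h t rfl

theorem sn_app_l {t s : Tm} (h : SN (Tm.app t s)) : SN t :=
  sn_of_image (fun x => Tm.app x s) (fun _ _ hs => Step.appL hs) t h

theorem sn_p1 {t : Tm} (h : SN (Tm.p1 t)) : SN t :=
  sn_of_image Tm.p1 (fun _ _ hs => Step.p1_cong hs) t h

theorem sn_subst (σ) (t : Tm) (h : SN (t.subst σ)) : SN t :=
  sn_of_image (fun x => x.subst σ) (fun _ _ hs => step_subst hs σ) t h

end Tm

open Tm in
theorem cr : ∀ A : Ty,
    (∀ t, Red A t → Tm.SN t) ∧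
    (∀ t t', Red A t → Tm.Step t t' → Red A t') ∧
    (∀ t, t.Neutral → (∀ t', Tm.Step t t' → Red A t') → Red A t) := by
  intro A
  induction A with
  | base =>
    refine ⟨fun t h => h, fun t t' h hs => h.inv hs, fun t _ h => Acc.intro _ (fun t' hs => h t' hs)⟩
  | arr A B ihA ihB =>
    obtain ⟨c1A, c2A, c3A⟩ := ihA
    obtain ⟨c1B, c2B, c3B⟩ := ihB
    have hvar : ∀ n, Red A (Tm.var n) := fun n => c3A _ trivial (fun t' h => nomatch h)
    refine ⟨?_, ?_, ?_⟩
    · intro t ht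
      exact sn_app_l (c1B _ (ht (Tm.var 0) (hvar 0)))
    · intro t t' ht hs s hsred
      exact c2B _ _ (ht s hsred) (Tm.Step.appL hs)
    · intro t hneut hred s hs
      have hsn := c1A s hs
      revert hs
      induction hsn with
      | intro s hsteps ih =>
        intro hs
        refine c3B _ trivial ?_
        intro r hr
        cases hr with
        | beta => exact False.elim hneut
        | pairApp => exact False.elim hneut
        | appL h' => exact hred _ h' s hs
        | appR h' => exact ih _ h' (c2A _ _ hs h')
  | conj A B ihA ihB =>
    obtain ⟨c1A, c2A, c3A⟩ := ihA
    obtain ⟨c1B, c2B, c3B⟩ := ihB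
    refine ⟨?_, ?_, ?_⟩
    · intro t ht
      exact sn_p1 (c1A _ ht.1)
    · intro t t' ht hs
      exact ⟨c2A _ _ ht.1 (Tm.Step.p1_cong hs), c2B _ _ ht.2 (Tm.Step.p2_cong hs)⟩
    · intro t hneut hred
      constructor
      · refine c3A _ trivial ?_
        intro r hr
        cases hr with
        | proj1 => exact False.elim hneut
        | projLam1 => exact False.elim hneut
        | p1_cong h' => exact (hred _ h').1
      · refine c3B _ trivial ?_
        intro r hr
        cases hr with
        | proj2 => exact False.elim hneut
        | projLam2 => exact False.elim hneut
        | p2_cong h' => exact (hred _ h').2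

theorem cr1 (A : Ty) {t} (h : Red A t) : Tm.SN t := (cr A).1 t h
theorem cr2 (A : Ty) {t t'} (h : Red A t) (hs : Tm.Step t t') : Red A t' := (cr A).2.1 t t' h hs
theorem cr3 (A : Ty) {t} (hn : t.Neutral) (h : ∀ t', Tm.Step t t' → Red A t') : Red A t :=
  (cr A).2.2 t hn h

theorem red_var (A : Ty) (n : ℕ) : Red A (Tm.var n) :=
  cr3 A trivial (fun _ h => nomatch h)

theorem red_steps {A : Ty} {t t'} (h : Red A t) (hs : Tm.Steps t t') : Red A t' := by
  induction hs with
  | refl => exact h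
  | tail _ h2 ih => exact cr2 A ih h2

open Tm in
theorem red_beta (B : Ty) : ∀ u, SN u → ∀ s, SN s →
    Red B (u.subst1 s) → Red B (Tm.app (Tm.lam u) s) := by
  intro u hu
  induction hu with
  | intro u huS ihu =>
    intro s hs
    induction hs with
    | intro s hsS ihs =>
      intro h
      refine cr3 B trivial ?_
      intro r hr
      cases hr with
      | beta => exact h
      | appL h' =>
        cases h' with
        | lam_cong h'' =>
          exact ihu _ h'' s (Acc.intro s hsS) (cr2 B h (step_subst h'' _))
      | appR h' =>
        exact ihs _ h' (red_steps h (steps_subst1_arg u h'))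

open Tm in
theorem red_p1 (A : Ty) : ∀ t, SN t → ∀ s, SN s → Red A t → Red A (Tm.p1 (Tm.pair t s)) := by
  intro t ht
  induction ht with
  | intro t htS iht =>
    intro s hs
    induction hs with
    | intro s hsS ihs =>
      intro h
      refine cr3 A trivial ?_
      intro r hr
      cases hr with
      | proj1 => exact h
      | p1_cong h' =>
        cases h' with
        | pairL h'' => exact iht _ h'' s (Acc.intro s hsS) (cr2 A h h'')
        | pairR h'' => exact ihs _ h'' h

open Tm in
theorem red_p2 (B : Ty) : ∀ t, SN t → ∀ s, SN s → Red B s → Red B (Tm.p2 (Tm.pair t s)) := by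
  intro t ht
  induction ht with
  | intro t htS iht =>
    intro s hs
    induction hs with
    | intro s hsS ihs =>
      intro h
      refine cr3 B trivial ?_
      intro r hr
      cases hr with
      | proj2 => exact h
      | p2_cong h' =>
        cases h' with
        | pairL h'' => exact iht _ h'' s (Acc.intro s hsS) h
        | pairR h'' => exact ihs _ h'' (cr2 B h h'')

open Tm in
theorem distr_fwd1 (B : Ty) : ∀ t, SN t → ∀ s, SN s →
    Red B (Tm.p1 (Tm.app t s)) → Red B (Tm.app (Tm.p1 t) s) := by
  intro t ht
  induction ht with
  | intro t htS iht =>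
    intro s hs
    induction hs with
    | intro s hsS ihs =>
      intro h
      refine cr3 B trivial ?_
      intro r hr
      cases hr with
      | appL h' =>
        cases h' with
        | p1_cong h'' =>
          exact iht _ h'' s (Acc.intro s hsS) (cr2 B h (Step.p1_cong (Step.appL h'')))
        | proj1 =>
          exact cr2 B (cr2 B h (Step.p1_cong (Step.pairApp _ _ _))) (Step.proj1 _ _)
        | projLam1 =>
          rename_i u
          have h2 : Red B ((Tm.p1 u).subst1 s) := cr2 B h (Step.p1_cong (Step.beta _ _))
          have hsn1 : SN ((Tm.p1 u).subst1 s) := cr1 B h2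
          have hsnu : SN (Tm.p1 u) := sn_subst _ _ hsn1
          exact red_beta B _ hsnu s (Acc.intro s hsS) h2
      | appR h' =>
        exact ihs _ h' (cr2 B h (Step.p1_cong (Step.appR h')))

open Tm in
theorem distr_fwd2 (C : Ty) : ∀ t, SN t → ∀ s, SN s →
    Red C (Tm.p2 (Tm.app t s)) → Red C (Tm.app (Tm.p2 t) s) := by
  intro t ht
  induction ht with
  | intro t htS iht =>
    intro s hs
    induction hs with
    | intro s hsS ihs =>
      intro h
      refine cr3 C trivial ?_
      intro r hr
      cases hr with
      | appL h' =>
        cases h' with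
        | p2_cong h'' =>
          exact iht _ h'' s (Acc.intro s hsS) (cr2 C h (Step.p2_cong (Step.appL h'')))
        | proj2 =>
          exact cr2 C (cr2 C h (Step.p2_cong (Step.pairApp _ _ _))) (Step.proj2 _ _)
        | projLam2 =>
          rename_i u
          have h2 : Red C ((Tm.p2 u).subst1 s) := cr2 C h (Step.p2_cong (Step.beta _ _))
          have hsn1 : SN ((Tm.p2 u).subst1 s) := cr1 C h2
          have hsnu : SN (Tm.p2 u) := sn_subst _ _ hsn1
          exact red_beta C _ hsnu s (Acc.intro s hsS) h2
      | appR h' =>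
        exact ihs _ h' (cr2 C h (Step.p2_cong (Step.appR h')))

open Tm in
theorem distr_bwd1 (B C : Ty) : ∀ t, SN t → ∀ s, SN s →
    Red B (Tm.app (Tm.p1 t) s) → Red C (Tm.app (Tm.p2 t) s) → Red B (Tm.p1 (Tm.app t s)) := by
  intro t ht
  induction ht with
  | intro t htS iht =>
    intro s hs
    induction hs with
    | intro s hsS ihs =>
      intro h1 h2
      refine cr3 B trivial ?_
      intro r hr
      cases hr with
      | p1_cong h' =>
        cases h' with
        | beta =>
          exact cr2 B (cr2 B h1 (Step.appL (Step.projLam1 _))) (Step.beta _ _)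
        | pairApp =>
          have hb : Red B (Tm.app _ s) := cr2 B h1 (Step.appL (Step.proj1 _ _))
          have hc : Red C (Tm.app _ s) := cr2 C h2 (Step.appL (Step.proj2 _ _))
          exact red_p1 B _ (cr1 B hb) _ (cr1 C hc) hb
        | appL h'' =>
          exact iht _ h'' s (Acc.intro s hsS)
            (cr2 B h1 (Step.appL (Step.p1_cong h''))) (cr2 C h2 (Step.appL (Step.p2_cong h'')))
        | appR h'' =>
          exact ihs _ h'' (cr2 B h1 (Step.appR h'')) (cr2 C h2 (Step.appR h''))

open Tm in
theorem distr_bwd2 (B C : Ty) : ∀ t, SN t → ∀ s, SN s →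
    Red B (Tm.app (Tm.p1 t) s) → Red C (Tm.app (Tm.p2 t) s) → Red C (Tm.p2 (Tm.app t s)) := by
  intro t ht
  induction ht with
  | intro t htS iht =>
    intro s hs
    induction hs with
    | intro s hsS ihs =>
      intro h1 h2
      refine cr3 C trivial ?_
      intro r hr
      cases hr with
      | p2_cong h' =>
        cases h' with
        | beta =>
          exact cr2 C (cr2 C h2 (Step.appL (Step.projLam2 _))) (Step.beta _ _)
        | pairApp =>
          have hb : Red B (Tm.app _ s) := cr2 B h1 (Step.appL (Step.proj1 _ _))
          have hc : Red C (Tm.app _ s) := cr2 C h2 (Step.appL (Step.proj2 _ _))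
          exact red_p2 C _ (cr1 B hb) _ (cr1 C hc) hc
        | appL h'' =>
          exact iht _ h'' s (Acc.intro s hsS)
            (cr2 B h1 (Step.appL (Step.p1_cong h''))) (cr2 C h2 (Step.appL (Step.p2_cong h'')))
        | appR h'' =>
          exact ihs _ h'' (cr2 B h1 (Step.appR h'')) (cr2 C h2 (Step.appR h''))

open Tm in
theorem iso_red {A B : Ty} (h : Iso A B) : ∀ t, Red A t ↔ Red B t := by
  induction h with
  | refl A => exact fun t => Iff.rfl
  | symm _ ih => exact fun t => (ih t).symm
  | trans _ _ ih1 ih2 => exact fun t => (ih1 t).trans (ih2 t)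
  | arrL B _ ih =>
    intro t
    exact ⟨fun ht s hs => ht s ((ih s).mpr hs), fun ht s hs => ht s ((ih s).mp hs)⟩
  | arrR A _ ih =>
    intro t
    exact ⟨fun ht s hs => (ih _).mp (ht s hs), fun ht s hs => (ih _).mpr (ht s hs)⟩
  | conjL B _ ih =>
    intro t
    exact ⟨fun ht => ⟨(ih _).mp ht.1, ht.2⟩, fun ht => ⟨(ih _).mpr ht.1, ht.2⟩⟩
  | conjR A _ ih =>
    intro t
    exact ⟨fun ht => ⟨ht.1, (ih _).mp ht.2⟩, fun ht => ⟨ht.1, (ih _).mpr ht.2⟩⟩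
  | distr A B C =>
    intro t
    constructor
    · intro ht
      have hsnt : SN t := sn_app_l (cr1 (Ty.conj B C) (ht _ (red_var A 0)))
      exact ⟨fun s hs => distr_fwd1 B t hsnt s (cr1 A hs) (ht s hs).1,
             fun s hs => distr_fwd2 C t hsnt s (cr1 A hs) (ht s hs).2⟩
    · intro ht s hs
      have hsnt : SN t := sn_p1 (sn_app_l (cr1 B (ht.1 _ (red_var A 0))))
      exact ⟨distr_bwd1 B C t hsnt s (cr1 A hs) (ht.1 s hs) (ht.2 s hs),
             distr_bwd2 B C t hsnt s (cr1 A hs) (ht.1 s hs) (ht.2 s hs)⟩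

open Tm in
theorem adequacy_aux {Γ : List Ty} {t : Tm} {A : Ty} (ht : Typing Γ t A) :
    ∀ θ : ℕ → Tm, (∀ n B, Γ[n]? = some B → Red B (θ n)) → Red A (t.subst θ) := by
  induction ht with
  | var h => intro θ hθ; exact hθ _ _ h
  | @lam Γ t A B h ih =>
    intro θ hθ
    intro s hs
    have hred : Red B (t.subst (fun n => match n with | 0 => s | n+1 => θ n)) := by
      apply ih
      intro n B' hn
      cases n with
      | zero =>
        simp only [List.getElem?_cons_zero] at hn
        injection hn with hn
        subst hn
        exact hs
      | succ n => exact hθ n B' hn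
    have heq := subst_up_subst1 t θ s
    have hsn : SN (t.subst (fun n => match n with | 0 => Tm.var 0 | n+1 => (θ n).rename Nat.succ)) := by
      apply sn_subst (fun n => match n with | 0 => s | n+1 => Tm.var n)
      rw [show (t.subst (fun n => match n with | 0 => Tm.var 0 | n+1 => (θ n).rename Nat.succ)).subst
            (fun n => match n with | 0 => s | n+1 => Tm.var n)
          = (t.subst (fun n => match n with | 0 => Tm.var 0 | n+1 => (θ n).rename Nat.succ)).subst1 s from rfl, heq]
      exact cr1 B hred
    refine red_beta B _ hsn s (cr1 A hs) ?_
    rw [heq]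
    exact hred
  | app h1 h2 ih1 ih2 =>
    intro θ hθ
    exact ih1 θ hθ _ (ih2 θ hθ)
  | pair h1 h2 ih1 ih2 =>
    intro θ hθ
    have ha := ih1 θ hθ
    have hb := ih2 θ hθ
    exact ⟨red_p1 _ _ (cr1 _ ha) _ (cr1 _ hb) ha, red_p2 _ _ (cr1 _ ha) _ (cr1 _ hb) hb⟩
  | p1 h ih => intro θ hθ; exact (ih θ hθ).1
  | p2 h ih => intro θ hθ; exact (ih θ hθ).2
  | iso h hiso ih => intro θ hθ; exact (iso_red hiso _).mp (ih θ hθ)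

end Aux

theorem adequacy (Γ : List Ty) (t : Tm) (A : Ty) (θ : ℕ → Tm)
    (ht : Typing Γ t A) (hθ : ∀ n B, Γ[n]? = some B → Red B (θ n)) :
    Red A (t.subst θ) := adequacy_aux ht θ hθ
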